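/- Let 𝕌 = (U, Θ, 𝔉) be a CF-approximation space. Then the structure C(𝕌) with token set 𝔉, CON_F = {𝔉-family {F}} ∪ {finite 𝔛 ⊆ 𝔉 : every G ∈ 𝔛 satisfies G ⊆ Θ̄(F)}, and entailment 𝔛 ⊩_F G iff G ⊆ Θ̄(E) for some E ∈ 𝔛 ∪ {F}, is an information frame satisfying all the information-frame axioms including global interpolation. -/
import Mathlib


/-- The data `(Con, Ent)` on token set `A` forms an information frame.
`Con i` is the set of finite sets of tokens consistent with `i`, and
`Ent i X a` means `X ⊢ᵢ a`.  The accessibility relation is `i R j ↔ {i} ∈ Con j`. -/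
structure IsInfoFrame {A : Type*} [DecidableEq A]
    (Con : A → Set (Finset A)) (Ent : A → Finset A → A → Prop) : Prop where
  self_con : ∀ i : A, ({i} : Finset A) ∈ Con i
  con_down : ∀ (i : A) (X Y : Finset A), Y ⊆ X → X ∈ Con i → Y ∈ Con i
  sound : ∀ (i : A) (X Y : Finset A), X ∈ Con i → (∀ b ∈ Y, Ent i X b) → Y ∈ Con i
  weaken : ∀ (i : A) (X Y : Finset A) (a : A),
    X ∈ Con i → Y ∈ Con i → X ⊆ Y → Ent i X a → Ent i Y a
  cut : ∀ (i : A) (X Y : Finset A) (a : A),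
    X ∈ Con i → (∀ b ∈ Y, Ent i X b) → Ent i Y a → Ent i X a
  con_transfer : ∀ i j : A, ({i} : Finset A) ∈ Con j → Con i ⊆ Con j
  ent_transfer : ∀ (i j : A) (X : Finset A) (a : A),
    ({i} : Finset A) ∈ Con j → X ∈ Con i → Ent i X a → Ent j X a
  interp : ∀ (i : A) (X Y : Finset A), X ∈ Con i → (∀ b ∈ Y, Ent i X b) →
    ∃ (e : A) (Z : Finset A), Z ∈ Con e ∧ (∀ b ∈ insert e Z, Ent i X b) ∧
      (∀ b ∈ Y, Ent e Z b)

/-- Finite consistency of a subset `x` of tokens. -/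
def FinConsistent {A : Type*} (Con : A → Set (Finset A)) (x : Set A) : Prop :=
  ∀ F : Finset A, ↑F ⊆ x → ∃ i ∈ x, F ∈ Con i

/-- Closure of `x` under entailment. -/
def EntClosed {A : Type*} (Con : A → Set (Finset A))
    (Ent : A → Finset A → A → Prop) (x : Set A) : Prop :=
  ∀ i ∈ x, ∀ X : Finset A, ↑X ⊆ x → X ∈ Con i → ∀ a : A, Ent i X a → a ∈ x

/-- Completeness of `x`. -/
def EntComplete {A : Type*} (Con : A → Set (Finset A))
    (Ent : A → Finset A → A → Prop) (x : Set A) : Prop :=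
  ∀ a ∈ x, ∃ i ∈ x, ∃ X : Finset A, ↑X ⊆ x ∧ X ∈ Con i ∧ Ent i X a

/-- A (global) state of an information frame. -/
def IsState {A : Type*} (Con : A → Set (Finset A))
    (Ent : A → Finset A → A → Prop) (x : Set A) : Prop :=
  FinConsistent Con x ∧ EntClosed Con Ent x ∧ EntComplete Con Ent x

/-- Upper approximation operator. -/
def upperApprox {U : Type*} (Θ : U → U → Prop) (X : Set U) : Set U :=
  {x | ∃ y ∈ X, Θ x y}

/-- The CF-interpolation condition on a family `𝔉` of finite subsets. -/
def CFCondition {U : Type*} (Θ : U → U → Prop) (𝔉 : Set (Finset U)) : Prop :=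
  ∀ F ∈ 𝔉, ∀ K : Finset U, ↑K ⊆ upperApprox Θ ↑F →
    ∃ G ∈ 𝔉, ↑K ⊆ upperApprox Θ ↑G ∧ (↑G : Set U) ⊆ upperApprox Θ ↑F

/-- The consistency predicates of the information frame `C(𝕌)` with tokens `𝔉`. -/
def cfCon {U : Type*} (Θ : U → U → Prop) (𝔉 : Set (Finset U)) :
    {F : Finset U // F ∈ 𝔉} → Set (Finset {F : Finset U // F ∈ 𝔉}) :=
  fun F => {({F} : Finset {F : Finset U // F ∈ 𝔉})} ∪
    {𝔛 | ∀ G ∈ 𝔛, (↑(G : {F : Finset U // F ∈ 𝔉}).val : Set U) ⊆ upperApprox Θ ↑F.val}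

/-- The entailment relations of `C(𝕌)`: `𝔛 ⊩_F G` iff `G ⊆ Θ̄(E)` for some
`E ∈ 𝔛 ∪ {F}`. -/
def cfEnt {U : Type*} [DecidableEq U] (Θ : U → U → Prop) (𝔉 : Set (Finset U)) :
    {F : Finset U // F ∈ 𝔉} → Finset {F : Finset U // F ∈ 𝔉} →
      {F : Finset U // F ∈ 𝔉} → Prop :=
  fun F 𝔛 G => ∃ E ∈ insert F 𝔛, (↑G.val : Set U) ⊆ upperApprox Θ ↑E.val

theorem stmt17 {U : Type*} [DecidableEq U] (Θ : U → U → Prop) (𝔉 : Set (Finset U))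
    (hT : Transitive Θ) (hCF : CFCondition Θ 𝔉) :
    IsInfoFrame (cfCon Θ 𝔉) (cfEnt Θ 𝔉) := by
  classical
  have upt : ∀ {A B : Set U}, A ⊆ upperApprox Θ B → upperApprox Θ A ⊆ upperApprox Θ B := by
    intro A B h x hx
    obtain ⟨y, hy, hxy⟩ := hx
    obtain ⟨z, hz, hyz⟩ := h hy
    exact ⟨z, hz, hT hxy hyz⟩
  have memCon : ∀ (i : {F : Finset U // F ∈ 𝔉}) (X : Finset {F : Finset U // F ∈ 𝔉}),
      X ∈ cfCon Θ 𝔉 i ↔ X = {i} ∨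
        ∀ G ∈ X, (↑(G : {F : Finset U // F ∈ 𝔉}).val : Set U) ⊆ upperApprox Θ ↑i.val :=
    fun i X => Iff.rfl
  -- key: from X ∈ Con i and entailments, every entailed token is below Θ̄(i)
  have key : ∀ (i : {F : Finset U // F ∈ 𝔉}) (X : Finset {F : Finset U // F ∈ 𝔉})
      (b : {F : Finset U // F ∈ 𝔉}), X ∈ cfCon Θ 𝔉 i → cfEnt Θ 𝔉 i X b →
      (↑b.val : Set U) ⊆ upperApprox Θ ↑i.val := by
    intro i X b hX ⟨E, hE, hbE⟩
    rcases Finset.mem_insert.mp hE with h | h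
    · exact h ▸ hbE
    · rcases (memCon i X).mp hX with rfl | hX2
      · rw [Finset.mem_singleton.mp h] at hbE; exact hbE
      · exact fun x hx => upt (hX2 E h) (hbE hx)
  constructor
  · intro i; exact Or.inl rfl
  · intro i X Y hYX hX
    rcases (memCon i X).mp hX with rfl | hX2
    · by_cases h : i ∈ Y
      · left
        apply Finset.Subset.antisymm hYX
        intro a ha; rwa [Finset.mem_singleton.mp ha]
      · right; intro G hG
        exact absurd (Finset.mem_singleton.mp (hYX hG) ▸ hG) h
    · exact Or.inr fun G hG => hX2 G (hYX hG)
  · intro i X Y hX hY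
    exact Or.inr fun b hb => key i X b hX (hY b hb)
  · intro i X Y a _ _ hXY ⟨E, hE, hE2⟩
    rcases Finset.mem_insert.mp hE with h | h
    · exact ⟨E, h ▸ Finset.mem_insert_self _ _, hE2⟩
    · exact ⟨E, Finset.mem_insert_of_mem (hXY h), hE2⟩
  · intro i X Y a hX hY ⟨E, hE, hE2⟩
    rcases Finset.mem_insert.mp hE with h | h
    · exact ⟨i, Finset.mem_insert_self _ _, h ▸ hE2⟩
    · have hEi : (↑E.val : Set U) ⊆ upperApprox Θ ↑i.val := key i X E hX (hY E h)
      exact ⟨i, Finset.mem_insert_self _ _, fun x hx => upt hEi (hE2 hx)⟩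
  · intro i j hij X hX
    rcases (memCon j {i}).mp hij with h | h
    · have : i = j := Finset.singleton_injective h
      exact this ▸ hX
    · have hij2 : (↑i.val : Set U) ⊆ upperApprox Θ ↑j.val := h i (Finset.mem_singleton_self i)
      rcases (memCon i X).mp hX with rfl | hX2
      · exact hij
      · exact Or.inr fun G hG x hx => upt hij2 (hX2 G hG hx)
  · intro i j X a hij hX ⟨E, hE, hE2⟩
    rcases Finset.mem_insert.mp hE with h | h
    · subst h
      rcases (memCon j {E}).mp hij with h2 | h2
      · have : E = j := Finset.singleton_injective h2
        exact ⟨j, Finset.mem_insert_self _ _, this ▸ hE2⟩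
      · have hij2 : (↑E.val : Set U) ⊆ upperApprox Θ ↑j.val :=
          h2 E (Finset.mem_singleton_self E)
        exact ⟨j, Finset.mem_insert_self _ _, fun x hx => upt hij2 (hE2 hx)⟩
    · exact ⟨E, Finset.mem_insert_of_mem h, hE2⟩
  · intro i X Y hX hY
    have allY : ∀ b ∈ Y, (↑(b : {F : Finset U // F ∈ 𝔉}).val : Set U) ⊆ upperApprox Θ ↑i.val :=
      fun b hb => key i X b hX (hY b hb)
    set K : Finset U := Y.biUnion (fun b => b.val) with hKdef
    have hK : (↑K : Set U) ⊆ upperApprox Θ ↑i.val := by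
      intro x hx
      obtain ⟨b, hb, hxb⟩ := Finset.mem_biUnion.mp hx
      exact allY b hb hxb
    obtain ⟨G, hG, hKG, hGi⟩ := hCF i.val i.property K hK
    refine ⟨⟨G, hG⟩, ∅, Or.inr (by simp), ?_, ?_⟩
    · intro b hb
      have : b = ⟨G, hG⟩ := by simpa using hb
      exact ⟨i, Finset.mem_insert_self _ _, this ▸ hGi⟩
    · intro b hb
      refine ⟨⟨G, hG⟩, Finset.mem_insert_self _ _, ?_⟩
      intro x hx
      exact hKG (Finset.mem_coe.mpr (Finset.mem_biUnion.mpr ⟨b, hb, hx⟩))
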